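/- (Theorem 6.4, second claim) Let ω have Narain coordinates (τ,ũ,z) with Im ũ = ũ₂ > max(ρ(τ), 2/√3), where ρ(τ) = sup_{m∈SL(2,ℤ)} Im(m·τ). If r = (a₁,a₂)(b₁,b₂)(c) ∈ L satisfies ⟨r,r⟩ = -2 and ⟨ω,r⟩ = 0, then a₁ = a₂ = 0, i.e., r ∈ V^⊥. -/

import Mathlib

open Complex

/-- The ℂ-bilinear extension of the form on `Λ` (given by the real matrix `G`)
to `Λ ⊗ ℂ ≅ ℂ¹⁶`. -/
noncomputable def pairC (G : Matrix (Fin 16) (Fin 16) ℝ) (x y : Fin 16 → ℂ) : ℂ :=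
  ∑ i : Fin 16, ∑ j : Fin 16, (G i j : ℂ) * x i * y j

/-- The real form on `Λ ⊗ ℝ ≅ ℝ¹⁶` given by `G`. -/
noncomputable def pairR (G : Matrix (Fin 16) (Fin 16) ℝ) (x y : Fin 16 → ℝ) : ℝ :=
  ∑ i : Fin 16, ∑ j : Fin 16, G i j * x i * y j

/-- The ℂ-bilinear pairing on `L ⊗ ℂ` where `L = H ⊕ H ⊕ Λ`: an element
`(a₁,a₂)(b₁,b₂)(c)` denotes `a₁x₁+a₂x₂+b₁y₁+b₂y₂+c`, and
`⟨(a₁,a₂)(b₁,b₂)(c),(a₁',a₂')(b₁',b₂')(c')⟩ = a₁b₁'+a₂b₂'+b₁a₁'+b₂a₂'+(c,c')`. -/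
noncomputable def pairL (G : Matrix (Fin 16) (Fin 16) ℝ)
    (a₁ a₂ b₁ b₂ : ℂ) (c : Fin 16 → ℂ)
    (a₁' a₂' b₁' b₂' : ℂ) (c' : Fin 16 → ℂ) : ℂ :=
  a₁ * b₁' + a₂ * b₂' + b₁ * a₁' + b₂ * a₂' + pairC G c c'

lemma pairC_re (G : Matrix (Fin 16) (Fin 16) ℝ) (f g : Fin 16 → ℂ) :
    (pairC G f g).re = pairR G (fun i => (f i).re) (fun i => (g i).re)
      - pairR G (fun i => (f i).im) (fun i => (g i).im) := by
  simp [pairC, pairR, Complex.mul_re, Complex.mul_im, mul_sub, Finset.sum_sub_distrib, mul_assoc]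

lemma pairC_im (G : Matrix (Fin 16) (Fin 16) ℝ) (f g : Fin 16 → ℂ) :
    (pairC G f g).im = pairR G (fun i => (f i).re) (fun i => (g i).im)
      + pairR G (fun i => (f i).im) (fun i => (g i).re) := by
  simp [pairC, pairR, Complex.mul_re, Complex.mul_im, mul_add, Finset.sum_add_distrib, mul_assoc]

lemma pairR_symm (G : Matrix (Fin 16) (Fin 16) ℝ) (hsym : ∀ i j, G i j = G j i)
    (f g : Fin 16 → ℝ) : pairR G f g = pairR G g f := by
  unfold pairR
  rw [Finset.sum_comm]
  refine Finset.sum_congr rfl fun i _ => Finset.sum_congr rfl fun j _ => ?_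
  rw [hsym]; ring

lemma pairR_addl (G : Matrix (Fin 16) (Fin 16) ℝ) (f g h : Fin 16 → ℝ) :
    pairR G (fun i => f i + g i) h = pairR G f h + pairR G g h := by
  simp [pairR, add_mul, mul_add, Finset.sum_add_distrib]

lemma pairR_addr (G : Matrix (Fin 16) (Fin 16) ℝ) (f g h : Fin 16 → ℝ) :
    pairR G h (fun i => f i + g i) = pairR G h f + pairR G h g := by
  simp [pairR, add_mul, mul_add, Finset.sum_add_distrib]

lemma pairR_smull (G : Matrix (Fin 16) (Fin 16) ℝ) (r : ℝ) (f h : Fin 16 → ℝ) :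
    pairR G (fun i => r * f i) h = r * pairR G f h := by
  simp only [pairR, Finset.mul_sum]
  refine Finset.sum_congr rfl fun i _ => Finset.sum_congr rfl fun j _ => by ring

lemma pairR_smulr (G : Matrix (Fin 16) (Fin 16) ℝ) (r : ℝ) (f h : Fin 16 → ℝ) :
    pairR G h (fun i => r * f i) = r * pairR G h f := by
  simp only [pairR, Finset.mul_sum]
  refine Finset.sum_congr rfl fun i _ => Finset.sum_congr rfl fun j _ => by ring

lemma pairR_expand (G : Matrix (Fin 16) (Fin 16) ℝ) (hsym : ∀ i j, G i j = G j i)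
    (p q r : ℝ) (C X Y : Fin 16 → ℝ) :
    pairR G (fun i => p * C i + q * X i + r * Y i) (fun i => p * C i + q * X i + r * Y i)
      = p^2 * pairR G C C + q^2 * pairR G X X + r^2 * pairR G Y Y
        + 2*p*q * pairR G C X + 2*p*r * pairR G C Y + 2*q*r * pairR G X Y := by
  simp only [pairR_addl, pairR_addr, pairR_smull, pairR_smulr,
    pairR_symm G hsym X C, pairR_symm G hsym Y C, pairR_symm G hsym Y X]
  ring

/-- `ρ(τ) = sup over m ∈ SL(2,ℤ) of Im(m·τ)`. -/
noncomputable def rho (τ : ℂ) : ℝ :=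
  sSup {y : ℝ | ∃ a b c d : ℤ, a * d - b * c = 1 ∧
    y = (((a : ℂ) * τ + b) / ((c : ℂ) * τ + d)).im}

lemma mobius_im (τ : ℂ) (a b c d : ℝ) (h : ((c:ℂ)*τ + d) ≠ 0) :
    (((a:ℂ)*τ+b)/((c:ℂ)*τ+d)).im
      = (a*d - b*c)*τ.im / Complex.normSq ((c:ℂ)*τ+d) := by
  have hN : Complex.normSq ((c:ℂ)*τ+d) ≠ 0 := by
    simpa [Complex.normSq_eq_zero] using h
  rw [Complex.div_im]
  simp only [Complex.add_re, Complex.add_im, Complex.mul_re, Complex.mul_im,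
    Complex.ofReal_re, Complex.ofReal_im]
  field_simp
  ring

lemma rho_bdd (τ : ℂ) (hτ : 0 < τ.im) :
    BddAbove {y : ℝ | ∃ a b c d : ℤ, a * d - b * c = 1 ∧
      y = (((a : ℂ) * τ + b) / ((c : ℂ) * τ + d)).im} := by
  refine ⟨max τ.im (1/τ.im), ?_⟩
  rintro y ⟨a, b, c, d, hdet, rfl⟩
  by_cases hw : ((c:ℂ)*τ + (d:ℂ)) = 0
  · rw [show ((c:ℤ):ℂ) * τ + ((d:ℤ):ℂ) = 0 from hw]
    simp only [div_zero, Complex.zero_im]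
    exact le_max_of_le_left hτ.le
  · have hdetR : (a:ℝ)*(d:ℝ) - (b:ℝ)*(c:ℝ) = 1 := by exact_mod_cast hdet
    rw [show ((a:ℤ):ℂ) * τ + ((b:ℤ):ℂ) = ((a:ℝ):ℂ)*τ + ((b:ℝ):ℝ) from by push_cast; ring,
        show ((c:ℤ):ℂ) * τ + ((d:ℤ):ℂ) = ((c:ℝ):ℂ)*τ + ((d:ℝ):ℝ) from by push_cast; ring] at *
    rw [mobius_im τ _ _ _ _ hw, hdetR, one_mul]
    have hN : Complex.normSq (((c:ℝ):ℂ)*τ + ((d:ℝ):ℂ)) =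
        ((c:ℝ)*τ.re + d)^2 + ((c:ℝ)*τ.im)^2 := by
      simp [Complex.normSq_apply, Complex.add_re, Complex.add_im, Complex.mul_re,
        Complex.mul_im]
      ring
    by_cases hc : c = 0
    · have hd : d ≠ 0 := by
        rintro rfl; simp [hc] at hw
      have h1 : (1:ℝ) ≤ Complex.normSq (((c:ℝ):ℂ)*τ + ((d:ℝ):ℂ)) := by
        rw [hN, hc]
        have hd1 : (1:ℝ) ≤ ((d:ℝ))^2 := by
          have : (1:ℤ) ≤ d^2 := by
            rcases lt_or_gt_of_ne hd with h | h <;> nlinarith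
          exact_mod_cast this
        push_cast
        nlinarith [sq_nonneg τ.im]
      refine le_max_of_le_left ?_
      rw [div_le_iff₀ (by linarith)]
      nlinarith
    · have h1 : τ.im^2 ≤ Complex.normSq (((c:ℝ):ℂ)*τ + ((d:ℝ):ℂ)) := by
        rw [hN]
        have hc1 : (1:ℝ) ≤ ((c:ℝ))^2 := by
          have : (1:ℤ) ≤ c^2 := by
            rcases lt_or_gt_of_ne hc with h | h <;> nlinarith
          exact_mod_cast this
        nlinarith [sq_nonneg ((c:ℝ)*τ.re + d), sq_nonneg τ.im]
      refine le_max_of_le_right ?_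
      rw [div_le_div_iff₀ (by nlinarith) hτ]
      nlinarith

lemma rho_ge (τ : ℂ) (hτ : 0 < τ.im) (a₁ a₂ : ℤ) (hne : ¬(a₁ = 0 ∧ a₂ = 0)) :
    τ.im / Complex.normSq ((a₂:ℂ)*τ - (a₁:ℂ)) ≤ rho τ := by
  set g : ℤ := (Int.gcd a₁ a₂ : ℤ) with hg
  have hgnat : Int.gcd a₁ a₂ ≠ 0 := by
    intro h
    exact hne (Int.gcd_eq_zero_iff.mp h)
  have hg0 : 0 < g := by
    have := Nat.pos_of_ne_zero hgnat
    rw [hg]; exact_mod_cast this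
  have hdvd1 : g ∣ a₁ := Int.gcd_dvd_left a₁ a₂
  have hdvd2 : g ∣ a₂ := Int.gcd_dvd_right a₁ a₂
  set c' : ℤ := a₂ / g with hc'
  set d' : ℤ := -(a₁ / g) with hd'
  have ha₂ : a₂ = g * c' := by rw [hc', Int.mul_ediv_cancel' hdvd2]
  have ha₁ : a₁ = -(g * d') := by
    have h5 := Int.mul_ediv_cancel' hdvd1
    rw [hd', mul_neg, h5, neg_neg]
  have hcop : Int.gcd c' d' = 1 := by
    rw [hd', hc', Int.gcd_neg, hg, Int.gcd_comm]
    exact Int.gcd_div_gcd_div_gcd (Nat.pos_of_ne_zero hgnat)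
  obtain ⟨u, v, hbez⟩ : ∃ u v : ℤ, c' * u + d' * v = 1 := by
    refine ⟨Int.gcdA c' d', Int.gcdB c' d', ?_⟩
    have := Int.gcd_eq_gcd_ab c' d'
    rw [hcop] at this
    exact_mod_cast this.symm
  -- the SL2 element (v, -u; c', d')
  set w : ℂ := (c':ℂ)*τ + (d':ℂ) with hw
  have hw0 : w ≠ 0 := by
    intro h0
    have him : (c':ℝ) * τ.im = 0 := by
      have := congrArg Complex.im h0
      simpa [hw, Complex.add_im, Complex.mul_im] using this
    have hc0 : c' = 0 := by
      have : (c':ℝ) = 0 := by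
        rcases mul_eq_zero.mp him with h | h
        · exact h
        · exact absurd h (ne_of_gt hτ)
      exact_mod_cast this
    have hre : (d':ℝ) = 0 := by
      have := congrArg Complex.re h0
      simpa [hw, hc0, Complex.add_re, Complex.mul_re] using this
    have hd0 : d' = 0 := by exact_mod_cast hre
    exact hne ⟨by simp [ha₁, hd0], by simp [ha₂, hc0]⟩
  have hN : 0 < Complex.normSq w := Complex.normSq_pos.mpr hw0
  have hdet : v * d' - (-u) * c' = 1 := by linarith [hbez]
  have hmem : (((v:ℂ) * τ + ((-u : ℤ):ℂ)) / ((c':ℂ) * τ + (d':ℂ))).im ∈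
      {y : ℝ | ∃ a b c d : ℤ, a * d - b * c = 1 ∧
        y = (((a : ℂ) * τ + b) / ((c : ℂ) * τ + d)).im} :=
    ⟨v, -u, c', d', hdet, rfl⟩
  have hle1 : (((v:ℂ) * τ + ((-u : ℤ):ℂ)) / ((c':ℂ) * τ + (d':ℂ))).im ≤ rho τ :=
    le_csSup (rho_bdd τ hτ) hmem
  have hval : (((v:ℂ) * τ + ((-u : ℤ):ℂ)) / ((c':ℂ) * τ + (d':ℂ))).im
      = τ.im / Complex.normSq w := by
    rw [show ((v:ℤ):ℂ) * τ + ((-u : ℤ):ℂ) = ((v:ℝ):ℂ)*τ + (((-u:ℤ):ℝ):ℂ) from by push_cast; ring,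
        show ((c':ℤ):ℂ) * τ + ((d':ℤ):ℂ) = ((c':ℝ):ℂ)*τ + (((d':ℤ):ℝ):ℂ) from by push_cast; ring]
    rw [mobius_im τ _ _ _ _ (by rw [hw] at hw0; push_cast at hw0 ⊢; exact hw0)]
    have : ((v:ℝ) * (d':ℝ) - ((-u:ℤ):ℝ) * (c':ℝ)) = 1 := by exact_mod_cast hdet
    rw [this, one_mul, hw]
    push_cast
    rfl
  have hfactor : Complex.normSq ((a₂:ℂ)*τ - (a₁:ℂ)) = (g:ℝ)^2 * Complex.normSq w := by
    have : ((a₂:ℤ):ℂ)*τ - ((a₁:ℤ):ℂ) = ((g:ℤ):ℂ) * w := by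
      rw [hw, ha₂, ha₁]; push_cast; ring
    rw [this, Complex.normSq_mul]
    congr 1
    rw [show ((g:ℤ):ℂ) = (((g:ℤ):ℝ):ℂ) from by push_cast; rfl, Complex.normSq_ofReal]
    ring
  rw [hfactor]
  refine le_trans ?_ (hval ▸ hle1)
  have hg1 : (1:ℝ) ≤ (g:ℝ)^2 := by
    have : (1:ℤ) ≤ g^2 := by nlinarith
    exact_mod_cast this
  apply div_le_div_of_nonneg_left hτ.le hN
  nlinarith

/-- Theorem 6.4, second claim: if the period `ω` has Narain coordinates `(τ,ut,z)`
with `Im ut > max(ρ(τ), 2/√3)`, then every root `r = (a₁,a₂)(b₁,b₂)(c)` with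
`⟨r,r⟩ = -2` and `⟨ω,r⟩ = 0` satisfies `a₁ = a₂ = 0`, i.e. `r ∈ V^⊥`. -/
theorem stmt16 (G : Matrix (Fin 16) (Fin 16) ℝ)
    (hsym : ∀ i j, G i j = G j i)
    (hneg : ∀ v : Fin 16 → ℝ, v ≠ 0 → pairR G v v < 0)
    (τ ut : ℂ) (z : Fin 16 → ℂ) (hτ : 0 < τ.im)
    (hlarge : max (rho τ) (2 / Real.sqrt 3) < ut.im)
    (a₁ a₂ b₁ b₂ : ℤ) (c : Fin 16 → ℤ)
    (hroot : 2 * ((a₁ : ℝ) * b₁ + (a₂ : ℝ) * b₂)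
        + pairR G (fun i => (c i : ℝ)) (fun i => (c i : ℝ)) = -2)
    (horth : pairL G τ 1
        (ut - pairC G z (fun i => ((z i).im : ℂ)) / ((2 * τ.im : ℝ) : ℂ))
        (-τ * ut + τ * pairC G z (fun i => ((z i).im : ℂ)) / ((2 * τ.im : ℝ) : ℂ)
          - pairC G z z / 2)
        z (a₁ : ℂ) (a₂ : ℂ) (b₁ : ℂ) (b₂ : ℂ) (fun i => (c i : ℂ)) = 0) :
    a₁ = 0 ∧ a₂ = 0 := by
  by_contra hcon
  set X : Fin 16 → ℝ := fun i => (z i).re with hX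
  set Y : Fin 16 → ℝ := fun i => (z i).im with hY
  set C : Fin 16 → ℝ := fun i => ((c i : ℤ) : ℝ) with hC
  have hS : pairC G z (fun i => ((z i).im : ℂ))
      = ((pairR G X Y : ℝ) : ℂ) + ((pairR G Y Y : ℝ) : ℂ) * I := by
    apply Complex.ext
    · rw [pairC_re]
      simp [pairR, hX, hY]
    · rw [pairC_im]
      simp [pairR, hX, hY]
  have hQ : pairC G z z
      = ((pairR G X X - pairR G Y Y : ℝ) : ℂ) + ((2 * pairR G X Y : ℝ) : ℂ) * I := by
    apply Complex.ext
    · rw [pairC_re]; simp [hX, hY]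
    · rw [pairC_im]
      simp only [Complex.add_im, Complex.ofReal_im, Complex.mul_im, Complex.I_im,
        Complex.I_re, Complex.ofReal_re, mul_zero, mul_one, zero_add]
      rw [pairR_symm G hsym Y X]; ring
  have hP : pairC G z (fun i => ((c i : ℤ) : ℂ))
      = ((pairR G X C : ℝ) : ℂ) + ((pairR G Y C : ℝ) : ℂ) * I := by
    apply Complex.ext
    · rw [pairC_re]; simp [pairR, hC, hX]
    · rw [pairC_im]; simp [pairR, hC, hY]
  have h := horth
  rw [pairL, hS, hQ, hP] at h
  have hτ2 : ((2 * τ.im : ℝ) : ℂ) ≠ 0 := by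
    simp only [ne_eq, Complex.ofReal_eq_zero]
    positivity
  have hτ2' : ((τ.im : ℝ) : ℂ) ≠ 0 := by
    simp only [ne_eq, Complex.ofReal_eq_zero]
    positivity
  field_simp [hτ2'] at h
  have hIm := congrArg Complex.im h
  have hRe := congrArg Complex.re h
  simp only [Complex.add_im, Complex.add_re, Complex.sub_im, Complex.sub_re,
    Complex.mul_im, Complex.mul_re, Complex.neg_im, Complex.neg_re,
    Complex.ofReal_im, Complex.ofReal_re, Complex.I_im, Complex.I_re,
    Complex.intCast_im, Complex.intCast_re, Complex.one_im, Complex.one_re,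
    Complex.zero_im, Complex.zero_re, Complex.re_ofNat, Complex.im_ofNat,
    Complex.ofReal_mul, Complex.ofReal_ofNat] at hIm hRe
  ring_nf at hIm hRe
  -- the vector c - a₂ x - ((a₁-a₂τ₁)/τ₂) y, scaled by τ₂
  set v' : Fin 16 → ℝ := fun i => τ.im * C i + (-(τ.im * (a₂:ℝ))) * X i
      + (-((a₁:ℝ) - (a₂:ℝ) * τ.re)) * Y i with hv'
  have hexp := pairR_expand G hsym (τ.im) (-(τ.im * (a₂:ℝ)))
      (-((a₁:ℝ) - (a₂:ℝ) * τ.re)) C X Y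
  have hvle : pairR G v' v' ≤ 0 := by
    by_cases h0 : v' = 0
    · have : pairR G v' v' = 0 := by
        rw [h0]; simp [pairR]
      linarith
    · exact (hneg v' h0).le
  have hvv : τ.im * pairR G v' v'
      = τ.im * (-2 * τ.im^2
        + 2 * (((a₁:ℝ) - (a₂:ℝ) * τ.re)^2 + ((a₂:ℝ) * τ.im)^2) * ut.im * τ.im) := by
    rw [hv', hexp, pairR_symm G hsym C X, pairR_symm G hsym C Y]
    linear_combination (-((a₁:ℝ) - (a₂:ℝ) * τ.re) * τ.im/2) * hIm
      + (-(a₂:ℝ) * τ.im^2/2) * hRe + τ.im^3 * hroot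
  have hkey : ut.im * (((a₁:ℝ) - (a₂:ℝ) * τ.re)^2 + ((a₂:ℝ) * τ.im)^2) ≤ τ.im := by
    have h1 : pairR G v' v'
        = -2 * τ.im^2
          + 2 * (((a₁:ℝ) - (a₂:ℝ) * τ.re)^2 + ((a₂:ℝ) * τ.im)^2) * ut.im * τ.im :=
      mul_left_cancel₀ (ne_of_gt hτ) hvv
    nlinarith [hτ]
  have hNval : Complex.normSq ((a₂:ℂ) * τ - (a₁:ℂ))
      = ((a₁:ℝ) - (a₂:ℝ) * τ.re)^2 + ((a₂:ℝ) * τ.im)^2 := by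
    simp [Complex.normSq_apply, Complex.sub_re, Complex.sub_im, Complex.mul_re,
      Complex.mul_im, Complex.intCast_re, Complex.intCast_im]
    ring
  have hA0 : 0 < Complex.normSq ((a₂:ℂ) * τ - (a₁:ℂ)) := by
    rw [Complex.normSq_pos]
    intro h0
    have him : (a₂:ℝ) * τ.im = 0 := by
      have := congrArg Complex.im h0
      simpa [Complex.sub_im, Complex.mul_im] using this
    have ha2 : a₂ = 0 := by
      have : (a₂:ℝ) = 0 := by
        rcases mul_eq_zero.mp him with hh | hh
        · exact hh
        · exact absurd hh (ne_of_gt hτ)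
      exact_mod_cast this
    have ha1 : a₁ = 0 := by
      have := congrArg Complex.re h0
      simp [Complex.sub_re, Complex.mul_re, ha2] at this
      exact_mod_cast this
    exact hcon ⟨ha1, ha2⟩
  have hrho : τ.im / Complex.normSq ((a₂:ℂ) * τ - (a₁:ℂ)) ≤ rho τ :=
    rho_ge τ hτ a₁ a₂ hcon
  have hrl : rho τ < ut.im := lt_of_le_of_lt (le_max_left _ _) hlarge
  have hle : ut.im ≤ τ.im / Complex.normSq ((a₂:ℂ) * τ - (a₁:ℂ)) := by
    rw [le_div_iff₀ hA0, hNval]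
    exact hkey
  linarith
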